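/- Let f be a division rule satisfying Assumption 1. Then for every interval bankruptcy situation (E,[d]) with exact estate, every i ∈ N, and every selection d* ∈ [d], one has f_i(E, d̲_i, d̄_{−i}) ≤ f_i(E, d*) ≤ f_i(E, d̄_i, d̲_{−i}); moreover both bounds are attained by selections of [d], so the interval F_i(f;E,[d]) = [f_i(E, d̲_i, d̄_{−i}), f_i(E, d̄_i, d̲_{−i})] is the smallest closed interval containing all values f_i(E,d*) with d* ∈ [d]. -/

import Mathlib

open Finset

/-- `(E, d)` is a (classical) bankruptcy problem: nonnegative estate, nonnegative
claims, and the estate does not exceed the total claim. -/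
def IsBP {n : ℕ} (E : ℝ) (d : Fin n → ℝ) : Prop :=
  0 ≤ E ∧ (∀ i, 0 ≤ d i) ∧ E ≤ ∑ i, d i

/-- `f` is a division rule: reasonable and efficient on every bankruptcy problem. -/
def IsDivisionRule {n : ℕ} (f : ℝ → (Fin n → ℝ) → Fin n → ℝ) : Prop :=
  ∀ E d, IsBP E d → (∀ i, 0 ≤ f E d i ∧ f E d i ≤ d i) ∧ (∑ i, f E d i) = E

/-- Assumption 1: over the domain of bankruptcy problems, each component `f i` is
nondecreasing in the estate `E`, nondecreasing in the own claim `d i`, and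
nonincreasing in every other claim `d j`, `j ≠ i`. -/
def Assumption1 {n : ℕ} (f : ℝ → (Fin n → ℝ) → Fin n → ℝ) : Prop :=
  (∀ E E' (d : Fin n → ℝ), IsBP E d → IsBP E' d → E ≤ E' → ∀ i, f E d i ≤ f E' d i) ∧
  (∀ E (d d' : Fin n → ℝ) (i : Fin n), IsBP E d → IsBP E d' → d i ≤ d' i →
      (∀ j, j ≠ i → d j = d' j) → f E d i ≤ f E d' i) ∧
  (∀ E (d d' : Fin n → ℝ) (i j : Fin n), j ≠ i → IsBP E d → IsBP E d' → d' j ≤ d j →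
      (∀ k, k ≠ j → d k = d' k) → f E d i ≤ f E d' i)

/-- The bankruptcy game `v_{E,d}(S) = max(0, E − Σ_{i ∈ N∖S} d i)`. -/
def bankruptcyGame {n : ℕ} (E : ℝ) (d : Fin n → ℝ) (S : Finset (Fin n)) : ℝ :=
  max 0 (E - ∑ i ∈ Sᶜ, d i)

/-- The truncated claims vector `d ∧ E`, with components `min (d i) E`. -/
def truncate {n : ℕ} (E : ℝ) (d : Fin n → ℝ) : Fin n → ℝ :=
  fun i => min (d i) E

/-- Interval bankruptcy situation with exact estate: estate `E` and interval
claims `[dl i, du i]`. -/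
def IsIntervalBP {n : ℕ} (E : ℝ) (dl du : Fin n → ℝ) : Prop :=
  0 ≤ E ∧ (∀ i, 0 ≤ dl i ∧ dl i ≤ du i) ∧ E ≤ ∑ i, dl i

/-- `d` is a selection of the interval claims `[dl, du]`. -/
def IsSelection {n : ℕ} (dl du d : Fin n → ℝ) : Prop :=
  ∀ i, dl i ≤ d i ∧ d i ≤ du i

/-- Lower endpoint of the interval bankruptcy rule based on `f`:
`f i (E, dl i, du₋ᵢ)`. -/
def ruleLow {n : ℕ} (f : ℝ → (Fin n → ℝ) → Fin n → ℝ) (E : ℝ) (dl du : Fin n → ℝ)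
    (i : Fin n) : ℝ :=
  f E (Function.update du i (dl i)) i

/-- Upper endpoint of the interval bankruptcy rule based on `f`:
`f i (E, du i, dl₋ᵢ)`. -/
def ruleHigh {n : ℕ} (f : ℝ → (Fin n → ℝ) → Fin n → ℝ) (E : ℝ) (dl du : Fin n → ℝ)
    (i : Fin n) : ℝ :=
  f E (Function.update dl i (du i)) i

/-- The interval bankruptcy rule (with exact estate) based on `f`, as an `n`-tuple of
intervals encoded as pairs (lower endpoint, upper endpoint). -/
def intervalRule {n : ℕ} (f : ℝ → (Fin n → ℝ) → Fin n → ℝ) (E : ℝ)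
    (dl du : Fin n → ℝ) : Fin n → ℝ × ℝ :=
  fun i => (ruleLow f E dl du i, ruleHigh f E dl du i)

/-- The interval bankruptcy game (with exact estate), each coalition value being the
interval `[v_{E,du}(S), v_{E,dl}(S)]` encoded as a pair. -/
def intervalGame {n : ℕ} (E : ℝ) (dl du : Fin n → ℝ) :
    Finset (Fin n) → ℝ × ℝ :=
  fun S => (bankruptcyGame E du S, bankruptcyGame E dl S)

/-- Interval bankruptcy situation with interval estate `[El, Eu]` and interval
claims `[dl i, du i]`. -/
def IsIntervalBPE {n : ℕ} (El Eu : ℝ) (dl du : Fin n → ℝ) : Prop :=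
  0 ≤ El ∧ El ≤ Eu ∧ (∀ i, 0 ≤ dl i ∧ dl i ≤ du i) ∧ Eu ≤ ∑ i, dl i

/-- The interval bankruptcy rule based on `f` for an interval estate. -/
def intervalRuleE {n : ℕ} (f : ℝ → (Fin n → ℝ) → Fin n → ℝ) (El Eu : ℝ)
    (dl du : Fin n → ℝ) : Fin n → ℝ × ℝ :=
  fun i => (ruleLow f El dl du i, ruleHigh f Eu dl du i)

/-- The interval bankruptcy game for an interval estate. -/
def intervalGameE {n : ℕ} (El Eu : ℝ) (dl du : Fin n → ℝ) :
    Finset (Fin n) → ℝ × ℝ :=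
  fun S => (bankruptcyGame El du S, bankruptcyGame Eu dl S)

lemma mono_aux {n : ℕ} (f : ℝ → (Fin n → ℝ) → Fin n → ℝ) (hA : Assumption1 f)
    (E : ℝ) (dl : Fin n → ℝ) (hE0 : 0 ≤ E) (hdl0 : ∀ k, 0 ≤ dl k)
    (hEsum : E ≤ ∑ k, dl k) (d d' : Fin n → ℝ)
    (hd : ∀ k, dl k ≤ d k) (hd' : ∀ k, dl k ≤ d' k) (i : Fin n)
    (hi : d' i ≤ d i) (hj : ∀ k, k ≠ i → d k ≤ d' k) :
    f E d' i ≤ f E d i := by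
  set g : Finset (Fin n) → Fin n → ℝ :=
    fun S k => if k ∈ S then d' k else d k with hg
  have hgl : ∀ S k, dl k ≤ g S k := by
    intro S k; by_cases h : k ∈ S <;> simp [hg, h, hd k, hd' k]
  have hBP : ∀ S, IsBP E (g S) := by
    intro S
    refine ⟨hE0, fun k => le_trans (hdl0 k) (hgl S k),
      le_trans hEsum (Finset.sum_le_sum fun k _ => hgl S k)⟩
  have key : ∀ S : Finset (Fin n), f E (g S) i ≤ f E d i := by
    intro S
    induction S using Finset.induction_on with
    | empty =>
        have : g ∅ = d := by funext k; simp [hg]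
        rw [this]
    | insert j S hjS ih =>
        have hagree : ∀ k, k ≠ j → g (insert j S) k = g S k := by
          intro k hk; simp [hg, Finset.mem_insert, hk]
        by_cases hji : j = i
        · subst hji
          refine le_trans ?_ ih
          apply hA.2.1 E _ _ j (hBP _) (hBP _)
          · simp [hg, hjS, hi]
          · exact hagree
        · have h1 : f E (g (insert j S)) i ≤ f E (g S) i := by
            apply hA.2.2 E _ _ i j hji (hBP _) (hBP _)
            · simp [hg, hjS, hj j hji]
            · exact hagree
          exact le_trans h1 ih
  have : g Finset.univ = d' := by funext k; simp [hg]
  rw [← this]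
  exact key Finset.univ

/-- under Assumption 1, for every interval bankruptcy situation with
exact estate, each selection value `f i (E, d*)` lies between the endpoints of the
interval rule, and both endpoints are attained by selections; hence
`F i (f; E, [d])` is the smallest closed interval containing all such values. -/
theorem stmt_1 (n : ℕ) (hn : 1 ≤ n)
    (f : ℝ → (Fin n → ℝ) → Fin n → ℝ) (hf : IsDivisionRule f)
    (hA : Assumption1 f) :
    ∀ E dl du, IsIntervalBP E dl du → ∀ i : Fin n,
      (∀ d, IsSelection dl du d →
        ruleLow f E dl du i ≤ f E d i ∧ f E d i ≤ ruleHigh f E dl du i) ∧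
      (∃ d, IsSelection dl du d ∧ f E d i = ruleLow f E dl du i) ∧
      (∃ d, IsSelection dl du d ∧ f E d i = ruleHigh f E dl du i) := by
  intro E dl du hIBP i
  obtain ⟨hE0, hdldu, hEsum⟩ := hIBP
  have hdl0 : ∀ k, 0 ≤ dl k := fun k => (hdldu k).1
  have hdlu : ∀ k, dl k ≤ du k := fun k => (hdldu k).2
  have hlow_sel : IsSelection dl du (Function.update du i (dl i)) := by
    intro k
    by_cases hk : k = i
    · subst hk; rw [Function.update_self]; exact ⟨le_rfl, hdlu k⟩
    · rw [Function.update_of_ne hk]; exact ⟨hdlu k, le_rfl⟩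
  have hhigh_sel : IsSelection dl du (Function.update dl i (du i)) := by
    intro k
    by_cases hk : k = i
    · subst hk; rw [Function.update_self]; exact ⟨hdlu k, le_rfl⟩
    · rw [Function.update_of_ne hk]; exact ⟨le_rfl, hdlu k⟩
  have hsel_ge : ∀ d, IsSelection dl du d → ∀ k, dl k ≤ d k :=
    fun d hd k => (hd k).1
  refine ⟨fun d hd => ?_, ⟨_, hlow_sel, rfl⟩, ⟨_, hhigh_sel, rfl⟩⟩
  constructor
  · -- ruleLow ≤ f E d i
    apply mono_aux f hA E dl hE0 hdl0 hEsum d _ (hsel_ge d hd)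
      (hsel_ge _ hlow_sel) i
    · simp [Function.update_self, (hd i).1]
    · intro k hk; simp [Function.update_of_ne hk, (hd k).2]
  · -- f E d i ≤ ruleHigh
    apply mono_aux f hA E dl hE0 hdl0 hEsum _ d (hsel_ge _ hhigh_sel)
      (hsel_ge d hd) i
    · simp [Function.update_self, (hd i).2]
    · intro k hk; simp [Function.update_of_ne hk, (hd k).1]
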